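/- Let K be a field of characteristic zero. For antichains C, C' in 𝔅_n, the ideals satisfy I_C ⊆ I_{C'} if and only if for each f ∈ C there exists f' ∈ C' with f ≤ f'. -/

import Mathlib

set_option synthInstance.maxHeartbeats 1000000
set_option maxHeartbeats 1000000

open MvPolynomial

/-- Multiplication by `x i` on the polynomial algebra. -/
noncomputable def xO (K : Type*) [Field K] (n : ℕ) (i : Fin n) :
    Module.End K (MvPolynomial (Fin n) K) :=
  LinearMap.mulLeft K (MvPolynomial.X i)

/-- The partial derivative `∂ i` on the polynomial algebra. -/
noncomputable def dO (K : Type*) [Field K] (n : ℕ) (i : Fin n) :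
    Module.End K (MvPolynomial (Fin n) K) :=
  (MvPolynomial.pderiv i).toLinearMap



/-- The Jacobian algebra `𝔸ₙ`: the subalgebra of `End_K(K[x₁,…,xₙ])` generated by the
Weyl algebra (i.e. the `xᵢ` and `∂ᵢ`) together with the inverses of the `Hᵢ = ∂ᵢ xᵢ`. -/
noncomputable def An (K : Type*) [Field K] (n : ℕ) :
    Subalgebra K (Module.End K (MvPolynomial (Fin n) K)) :=
  Algebra.adjoin K (Set.range (xO K n) ∪ Set.range (dO K n) ∪
    {g | ∃ i, g * (dO K n i * xO K n i) = 1 ∧ (dO K n i * xO K n i) * g = 1})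

/-- `I` is a two-sided ideal (as a `K`-submodule, which is automatic for ideals of a
unital `K`-algebra with central `K`). -/
def IsTwoSided {K A : Type*} [CommSemiring K] [Ring A] [Algebra K A]
    (I : Submodule K A) : Prop :=
  ∀ a ∈ I, ∀ r : A, r * a ∈ I ∧ a * r ∈ I

/-- A prime (two-sided) ideal: proper, and `I*J ⊆ P` implies `I ⊆ P` or `J ⊆ P`. -/
def IsPrimeIdeal {K A : Type*} [CommSemiring K] [Ring A] [Algebra K A]
    (P : Submodule K A) : Prop :=
  P ≠ ⊤ ∧ IsTwoSided P ∧
    ∀ I J : Submodule K A, IsTwoSided I → IsTwoSided J → I * J ≤ P → I ≤ P ∨ J ≤ P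

/-- The carrier of the height-one prime `𝔭ᵢ = 𝔸₁^{⊗(i−1)} ⊗ F ⊗ 𝔸₁^{⊗(n−i)}`:
operators in `𝔸ₙ` vanishing on `xᵢ^m · K[x₁,…,xₙ]` for some `m`. -/
def pCar (K : Type*) [Field K] (n : ℕ) (i : Fin n) : Set ↥(An K n) :=
  {a | ∃ m : ℕ, ∀ p : MvPolynomial (Fin n) K,
    (a : Module.End K (MvPolynomial (Fin n) K)) (MvPolynomial.X i ^ m * p) = 0}

/-- The carrier of the ideal `I_f = I_{f(1)} ⊗ ⋯ ⊗ I_{f(n)}` where `I_false = F` and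
`I_true = 𝔸₁`. -/
def IfCar (K : Type*) [Field K] (n : ℕ) (f : Fin n → Bool) : Set ↥(An K n) :=
  {a | ∀ i : Fin n, f i = false → a ∈ pCar K n i}

section Aux
variable (K : Type*) [Field K] [CharZero K] (n : ℕ)

noncomputable def Hinv (i : Fin n) : Module.End K (MvPolynomial (Fin n) K) :=
  (MvPolynomial.basisMonomials (Fin n) K).constr K
    fun μ => ((μ i : K) + 1)⁻¹ • MvPolynomial.monomial μ 1

lemma dO_monomial (i : Fin n) (μ : Fin n →₀ ℕ) (c : K) :
    dO K n i (monomial μ c) = monomial (μ - Finsupp.single i 1) (c * (μ i : K)) := by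
  simpa [dO] using pderiv_monomial (s := μ) (a := c) (i := i)

lemma H_monomial (i : Fin n) (μ : Fin n →₀ ℕ) (c : K) :
    (dO K n i * xO K n i) (monomial μ c) = ((μ i : K) + 1) • monomial μ c := by
  rw [Module.End.mul_apply]
  have hx : xO K n i (monomial μ c) = monomial (Finsupp.single i 1 + μ) c := by
    simp [xO, X, monomial_mul]
  rw [hx, dO_monomial, add_tsub_cancel_left]
  simp [smul_monomial, Finsupp.add_apply, mul_comm, add_comm]

lemma Hinv_monomial (i : Fin n) (μ : Fin n →₀ ℕ) (c : K) :
    Hinv K n i (monomial μ c) = ((μ i : K) + 1)⁻¹ • monomial μ c := by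
  have hb : (MvPolynomial.basisMonomials (Fin n) K) μ = monomial μ 1 := by
    rw [coe_basisMonomials]
  have hc : (monomial μ c : MvPolynomial (Fin n) K) = c • monomial μ 1 := by
    simp [smul_monomial]
  rw [hc, map_smul, ← hb, Hinv, Module.Basis.constr_basis, hb, smul_comm]

lemma cast_ne (m : ℕ) : ((m : K) + 1) ≠ 0 := by
  have := Nat.cast_add_one_ne_zero (R := K) m
  push_cast at this
  exact this

lemma Hinv_H (i : Fin n) :
    Hinv K n i * (dO K n i * xO K n i) = 1 ∧ (dO K n i * xO K n i) * Hinv K n i = 1 := by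
  constructor <;>
  · refine (MvPolynomial.basisMonomials (Fin n) K).ext fun μ => ?_
    have hb : (MvPolynomial.basisMonomials (Fin n) K) μ = monomial μ 1 := by
      rw [coe_basisMonomials]
    rw [hb, Module.End.mul_apply]
    first
    | rw [H_monomial, map_smul, Hinv_monomial, smul_smul,
        mul_inv_cancel₀ (cast_ne K (μ i)), one_smul, Module.End.one_apply]
    | rw [Hinv_monomial, map_smul, H_monomial, smul_smul,
        inv_mul_cancel₀ (cast_ne K (μ i)), one_smul, Module.End.one_apply]

noncomputable def eO (i : Fin n) : Module.End K (MvPolynomial (Fin n) K) :=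
  1 - xO K n i * Hinv K n i * dO K n i

lemma eO_monomial (i : Fin n) (μ : Fin n →₀ ℕ) (c : K) :
    eO K n i (monomial μ c) = if μ i = 0 then monomial μ c else 0 := by
  rw [eO, LinearMap.sub_apply, Module.End.one_apply, Module.End.mul_apply,
    Module.End.mul_apply, dO_monomial]
  by_cases h : μ i = 0
  · rw [if_pos h, h]
    simp
  · rw [if_neg h, Hinv_monomial]
    have hsub : ((μ - Finsupp.single i 1 : Fin n →₀ ℕ)) i = μ i - 1 := by
      rw [Finsupp.tsub_apply, Finsupp.single_eq_same]
    have hle : Finsupp.single i 1 ≤ μ :=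
      Finsupp.single_le_iff.mpr (Nat.one_le_iff_ne_zero.mpr h)
    have hadd : Finsupp.single i 1 + (μ - Finsupp.single i 1) = μ :=
      add_tsub_cancel_of_le hle
    have hcast : ((μ i - 1 : ℕ) : K) + 1 = (μ i : K) := by
      calc ((μ i - 1 : ℕ) : K) + 1 = ((μ i - 1 + 1 : ℕ) : K) := by push_cast; ring
        _ = (μ i : K) := by rw [Nat.sub_add_cancel (Nat.one_le_iff_ne_zero.mpr h)]
    have hx : ∀ d : K, xO K n i (monomial (μ - Finsupp.single i 1) d) = monomial μ d := by
      intro d; simp [xO, X, monomial_mul, hadd]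
    rw [map_smul, hx, hsub, hcast, smul_monomial]
    rw [smul_eq_mul,
      show ((μ i : K))⁻¹ * (c * (μ i : K)) = c * ((μ i : K)⁻¹ * (μ i : K)) by ring,
      inv_mul_cancel₀ (by exact_mod_cast h), mul_one, sub_self]

end Aux

section Aux2
variable (K : Type*) [Field K] [CharZero K] (n : ℕ)

lemma Hinv_mem (i : Fin n) : Hinv K n i ∈ An K n :=
  Algebra.subset_adjoin (Or.inr ⟨i, (Hinv_H K n i).1, (Hinv_H K n i).2⟩)

lemma eO_mem (i : Fin n) : eO K n i ∈ An K n := by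
  refine Subalgebra.sub_mem _ (one_mem _) ?_
  exact mul_mem (mul_mem (Algebra.subset_adjoin (Or.inl (Or.inl ⟨i, rfl⟩)))
    (Hinv_mem K n i)) (Algebra.subset_adjoin (Or.inl (Or.inr ⟨i, rfl⟩)))

noncomputable def EO (i : Fin n) : ↥(An K n) := ⟨eO K n i, eO_mem K n i⟩

noncomputable def PS (S : Finset (Fin n)) : Module.End K (MvPolynomial (Fin n) K) :=
  (MvPolynomial.basisMonomials (Fin n) K).constr K
    fun μ => if ∀ i ∈ S, μ i = 0 then MvPolynomial.monomial μ 1 else 0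

lemma PS_monomial (S : Finset (Fin n)) (μ : Fin n →₀ ℕ) (c : K) :
    PS K n S (monomial μ c) = if ∀ i ∈ S, μ i = 0 then monomial μ c else 0 := by
  have hb : (MvPolynomial.basisMonomials (Fin n) K) μ = monomial μ 1 := by
    rw [coe_basisMonomials]
  have hc : (monomial μ c : MvPolynomial (Fin n) K) = c • monomial μ 1 := by
    simp [smul_monomial]
  rw [hc, map_smul, ← hb, PS, Module.Basis.constr_basis, hb]
  by_cases h : ∀ i ∈ S, μ i = 0
  · rw [if_pos h, if_pos h]
  · rw [if_neg h, if_neg h, smul_zero]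

lemma PS_empty : PS K n ∅ = 1 := by
  refine (MvPolynomial.basisMonomials (Fin n) K).ext fun μ => ?_
  have hb : (MvPolynomial.basisMonomials (Fin n) K) μ = monomial μ 1 := by
    rw [coe_basisMonomials]
  rw [hb, PS_monomial, Module.End.one_apply, if_pos (by simp)]

lemma PS_insert (S : Finset (Fin n)) (j : Fin n) :
    PS K n (insert j S) = eO K n j * PS K n S := by
  classical
  refine (MvPolynomial.basisMonomials (Fin n) K).ext fun μ => ?_
  have hb : (MvPolynomial.basisMonomials (Fin n) K) μ = monomial μ 1 := by
    rw [coe_basisMonomials]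
  rw [hb, PS_monomial, Module.End.mul_apply, PS_monomial]
  by_cases hS : ∀ i ∈ S, μ i = 0
  · rw [if_pos hS, eO_monomial]
    by_cases hμj : μ j = 0
    · rw [if_pos hμj, if_pos]
      intro i hi
      rcases Finset.mem_insert.mp hi with h | h
      · rw [h]; exact hμj
      · exact hS i h
    · rw [if_neg hμj, if_neg]
      intro hall
      exact hμj (hall j (Finset.mem_insert_self j S))
  · rw [if_neg hS, map_zero, if_neg]
    intro hall
    exact hS fun i hi => hall i (Finset.mem_insert_of_mem hi)

lemma PS_mem (S : Finset (Fin n)) : PS K n S ∈ An K n := by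
  classical
  induction S using Finset.induction with
  | empty => rw [PS_empty]; exact one_mem _
  | @insert j S hj ih =>
    rw [PS_insert]
    exact mul_mem (eO_mem K n j) ih

lemma PS_kill (S : Finset (Fin n)) (j : Fin n) (hj : j ∈ S)
    (p : MvPolynomial (Fin n) K) :
    PS K n S (MvPolynomial.X j * p) = 0 := by
  induction p using MvPolynomial.induction_on' with
  | monomial μ c =>
    have hx : (MvPolynomial.X j : MvPolynomial (Fin n) K) * monomial μ c
        = monomial (Finsupp.single j 1 + μ) c := by
      simp [X, monomial_mul]
    rw [hx, PS_monomial, if_neg]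
    intro hall
    have := hall j hj
    simp [Finsupp.add_apply] at this
  | add p q hp hq => rw [mul_add, map_add, hp, hq, add_zero]

end Aux2

/-- For antichains `C, C'` of `{0,1}^{1..n}`, `I_C ⊆ I_{C'}` iff every
`f ∈ C` is dominated by some `f' ∈ C'`. -/
theorem stmt9 (K : Type*) [Field K] [CharZero K] (n : ℕ)
    (If : (Fin n → Bool) → Submodule K ↥(An K n))
    (hIf : ∀ f, (If f : Set ↥(An K n)) = IfCar K n f)
    (C C' : Set (Fin n → Bool))
    (hC : IsAntichain (· ≤ ·) C) (hC' : IsAntichain (· ≤ ·) C') :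
    (⨆ f ∈ C, If f) ≤ (⨆ f ∈ C', If f) ↔ ∀ f ∈ C, ∃ f' ∈ C', f ≤ f' := by
  classical
  constructor
  · intro h f hfC
    by_contra hno
    push_neg at hno
    set T : Finset (Fin n) := Finset.univ.filter (fun i => f i = true) with hT
    set S : Finset (Fin n) := Finset.univ.filter (fun i => f i = false) with hS
    set a : ↥(An K n) := ⟨PS K n S, PS_mem K n S⟩ with ha
    have haf : a ∈ If f := by
      rw [← SetLike.mem_coe, hIf]
      intro j hj
      refine ⟨1, fun p => ?_⟩
      have hjS : j ∈ S := by simp [hS, hj]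
      simpa using PS_kill K n S j hjS p
    have hmem : a ∈ ⨆ f' ∈ C', If f' :=
      h (Submodule.mem_iSup_of_mem f (Submodule.mem_iSup_of_mem hfC haf))
    set ν : ℕ → (Fin n →₀ ℕ) := fun m => ∑ i ∈ T, Finsupp.single i m with hν
    have hνj : ∀ m j, ν m j = if j ∈ T then m else 0 := by
      intro m j
      rw [hν]
      simp only [Finsupp.finset_sum_apply, Finsupp.single_apply]
      rw [Finset.sum_ite_eq' T j fun _ => m]
    have haν : ∀ m, (a : Module.End K (MvPolynomial (Fin n) K))
        (monomial (ν m) 1) = monomial (ν m) 1 := by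
      intro m
      show PS K n S _ = _
      rw [PS_monomial, if_pos]
      intro i hiS
      rw [hνj, if_neg]
      intro hiT
      rw [hS, Finset.mem_filter] at hiS
      rw [hT, Finset.mem_filter] at hiT
      rw [hiS.2] at hiT
      exact Bool.false_ne_true hiT.2
    have key : ∀ x : ↥(An K n), x ∈ (⨆ f' ∈ C', If f') →
        ∃ m : ℕ, ∀ m', m ≤ m' →
          (x : Module.End K (MvPolynomial (Fin n) K)) (monomial (ν m') 1) = 0 := by
      intro x hx
      rw [iSup_subtype'] at hx
      refine Submodule.iSup_induction
        (motive := fun z : ↥(An K n) => ∃ m : ℕ, ∀ m', m ≤ m' →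
          (z : Module.End K (MvPolynomial (Fin n) K)) (monomial (ν m') 1) = 0)
        _ hx (fun g y hy => ?_)
        ⟨0, fun m' _ => by rw [ZeroMemClass.coe_zero, LinearMap.zero_apply]⟩
        (fun y z hy hz => ?_)
      · have hng : ¬ f ≤ (g : Fin n → Bool) := hno g g.2
        rw [Pi.le_def] at hng
        push_neg at hng
        obtain ⟨j, hj⟩ := hng
        have hfg : f j = true ∧ (g : Fin n → Bool) j = false := by
          revert hj
          cases f j <;> cases (g : Fin n → Bool) j <;> decide
        rw [← SetLike.mem_coe, hIf] at hy
        obtain ⟨m, hm⟩ := hy j hfg.2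
        have hjT : j ∈ T := by
          rw [hT, Finset.mem_filter]
          exact ⟨Finset.mem_univ j, hfg.1⟩
        refine ⟨m, fun m' hm' => ?_⟩
        have hle : Finsupp.single j m ≤ ν m' := by
          rw [Finsupp.single_le_iff, hνj, if_pos hjT]
          exact hm'
        have hrw : (MvPolynomial.X j : MvPolynomial (Fin n) K) ^ m *
            monomial (ν m' - Finsupp.single j m) 1 = monomial (ν m') 1 := by
          rw [X_pow_eq_monomial, monomial_mul, one_mul, add_tsub_cancel_of_le hle]
        rw [← hrw]
        exact hm _
      · obtain ⟨m1, h1⟩ := hy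
        obtain ⟨m2, h2⟩ := hz
        refine ⟨max m1 m2, fun m' hm' => ?_⟩
        have hco : ((y + z : ↥(An K n)) : Module.End K (MvPolynomial (Fin n) K))
            = (y : Module.End K (MvPolynomial (Fin n) K)) + z := rfl
        rw [hco, LinearMap.add_apply, h1 m' (le_trans (le_max_left _ _) hm'),
          h2 m' (le_trans (le_max_right _ _) hm'), add_zero]
    obtain ⟨m, hm⟩ := key a hmem
    have h1 := haν m
    rw [hm m le_rfl] at h1
    exact one_ne_zero (MvPolynomial.monomial_eq_zero.mp h1.symm)
  · intro hdom
    refine iSup_le fun f => iSup_le fun hf => ?_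
    obtain ⟨f', hf', hle⟩ := hdom f hf
    refine le_trans ?_ (le_iSup_of_le f' (le_iSup_of_le hf' le_rfl))
    intro x hx
    rw [← SetLike.mem_coe, hIf] at hx ⊢
    intro i hi
    have h2 := hle i
    rw [hi] at h2
    exact hx i (le_bot_iff.mp h2)
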